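/- Let ν > 0 and let u : ℝ × ℝ → ℝ be infinitely differentiable on the open set ℝ × (0,∞), strictly positive there, and satisfy the heat equation ∂u/∂t = ν ∂²u/∂x² on ℝ × (0,∞). Define f(x,t) = -2ν · (∂u/∂x (x,t)) / u(x,t). Then f satisfies the viscous Burgers' equation on ℝ × (0,∞): ∂f/∂t + f · ∂f/∂x = ν · ∂²f/∂x² for all x ∈ ℝ and t > 0. -/

import Mathlib

open scoped ContDiff

private lemma hasDerivAt_slice1 {g : ℝ × ℝ → ℝ} {x t : ℝ} (hg : DifferentiableAt ℝ g (x, t)) :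
    HasDerivAt (fun x' => g (x', t)) (fderiv ℝ g (x, t) ((1 : ℝ), (0 : ℝ))) x :=
  hg.hasFDerivAt.comp_hasDerivAt x ((hasDerivAt_id x).prodMk (hasDerivAt_const x t))

private lemma hasDerivAt_slice2 {g : ℝ × ℝ → ℝ} {x t : ℝ} (hg : DifferentiableAt ℝ g (x, t)) :
    HasDerivAt (fun t' => g (x, t')) (fderiv ℝ g (x, t) ((0 : ℝ), (1 : ℝ))) t :=
  hg.hasFDerivAt.comp_hasDerivAt t ((hasDerivAt_const t x).prodMk (hasDerivAt_id t))

/-- Cole–Hopf transformation: if `u` is smooth, strictly positive, and solves the heat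
equation `∂u/∂t = ν ∂²u/∂x²` on `ℝ × (0, ∞)`, then `f = -2ν (∂u/∂x) / u` solves the viscous
Burgers' equation `∂f/∂t + f ∂f/∂x = ν ∂²f/∂x²` on `ℝ × (0, ∞)`. -/
theorem coleHopf_solves_burgers (ν : ℝ) (hν : 0 < ν) (u : ℝ → ℝ → ℝ)
    (hu_smooth : ContDiffOn ℝ (⊤ : ℕ∞) (fun p : ℝ × ℝ => u p.1 p.2) (Set.univ ×ˢ Set.Ioi 0))
    (hu_pos : ∀ x : ℝ, ∀ t ∈ Set.Ioi (0 : ℝ), 0 < u x t)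
    (hu_heat : ∀ x : ℝ, ∀ t ∈ Set.Ioi (0 : ℝ),
      deriv (fun t' => u x t') t = ν * deriv (fun x' => deriv (fun x'' => u x'' t) x') x)
    (f : ℝ → ℝ → ℝ)
    (hf : ∀ x t : ℝ, f x t = -2 * ν * deriv (fun x' => u x' t) x / u x t) :
    ∀ x : ℝ, ∀ t ∈ Set.Ioi (0 : ℝ),
      deriv (fun t' => f x t') t + f x t * deriv (fun x' => f x' t) x =
        ν * deriv (fun x' => deriv (fun x'' => f x'' t) x') x := by
  set s : Set (ℝ × ℝ) := Set.univ ×ˢ Set.Ioi 0 with hs_def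
  have hs : IsOpen s := isOpen_univ.prod isOpen_Ioi
  set U : ℝ × ℝ → ℝ := fun p : ℝ × ℝ => u p.1 p.2 with hU_def
  have hmem : ∀ (x t : ℝ), 0 < t → (x, t) ∈ s := by
    intro x t ht
    simp [hs_def, Set.mem_prod, ht]
  -- smoothness of derivatives
  have hsmooth_infty : ContDiffOn ℝ (∞ : WithTop ℕ∞) U s := hu_smooth
  have hA : ContDiffOn ℝ (∞ : WithTop ℕ∞) (fderiv ℝ U) s :=
    ((contDiffOn_infty_iff_fderiv_of_isOpen hs).1 hsmooth_infty).2
  set Ux : ℝ × ℝ → ℝ := fun p => fderiv ℝ U p ((1 : ℝ), (0 : ℝ)) with hUx_def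
  set Ut : ℝ × ℝ → ℝ := fun p => fderiv ℝ U p ((0 : ℝ), (1 : ℝ)) with hUt_def
  have hUx : ContDiffOn ℝ (∞ : WithTop ℕ∞) Ux s := hA.clm_apply contDiffOn_const
  have hUt : ContDiffOn ℝ (∞ : WithTop ℕ∞) Ut s := hA.clm_apply contDiffOn_const
  have hB : ContDiffOn ℝ (∞ : WithTop ℕ∞) (fderiv ℝ Ux) s :=
    ((contDiffOn_infty_iff_fderiv_of_isOpen hs).1 hUx).2
  set Uxx : ℝ × ℝ → ℝ := fun p => fderiv ℝ Ux p ((1 : ℝ), (0 : ℝ)) with hUxx_def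
  have hUxx : ContDiffOn ℝ (∞ : WithTop ℕ∞) Uxx s := hB.clm_apply contDiffOn_const
  have hC : ContDiffOn ℝ (∞ : WithTop ℕ∞) (fderiv ℝ Uxx) s :=
    ((contDiffOn_infty_iff_fderiv_of_isOpen hs).1 hUxx).2
  set Uxxx : ℝ × ℝ → ℝ := fun p => fderiv ℝ Uxx p ((1 : ℝ), (0 : ℝ)) with hUxxx_def
  -- differentiability helper
  have dAt : ∀ {g : ℝ × ℝ → ℝ}, ContDiffOn ℝ (∞ : WithTop ℕ∞) g s →
      ∀ {q : ℝ × ℝ}, q ∈ s → DifferentiableAt ℝ g q := by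
    intro g hg q hq
    exact (hg.contDiffAt (hs.mem_nhds hq)).differentiableAt (by simp)
  -- slice derivatives of u
  have e1 : ∀ (x t : ℝ), 0 < t → HasDerivAt (fun x' => u x' t) (Ux (x, t)) x := by
    intro x t ht
    exact hasDerivAt_slice1 (dAt hsmooth_infty (hmem x t ht))
  have e2 : ∀ (x t : ℝ), 0 < t → HasDerivAt (fun t' => u x t') (Ut (x, t)) t := by
    intro x t ht
    exact hasDerivAt_slice2 (dAt hsmooth_infty (hmem x t ht))
  have e3 : ∀ (x t : ℝ), 0 < t → HasDerivAt (fun x' => Ux (x', t)) (Uxx (x, t)) x := by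
    intro x t ht
    exact hasDerivAt_slice1 (dAt hUx (hmem x t ht))
  have e5 : ∀ (x t : ℝ), 0 < t → HasDerivAt (fun x' => Uxx (x', t)) (Uxxx (x, t)) x := by
    intro x t ht
    exact hasDerivAt_slice1 (dAt hUxx (hmem x t ht))
  have e6 : ∀ (x t : ℝ), 0 < t →
      HasDerivAt (fun x' => Ut (x', t)) (fderiv ℝ Ut (x, t) ((1 : ℝ), (0 : ℝ))) x := by
    intro x t ht
    exact hasDerivAt_slice1 (dAt hUt (hmem x t ht))
  have e4 : ∀ (x t : ℝ), 0 < t →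
      HasDerivAt (fun t' => Ux (x, t')) (fderiv ℝ Ux (x, t) ((0 : ℝ), (1 : ℝ))) t := by
    intro x t ht
    exact hasDerivAt_slice2 (dAt hUx (hmem x t ht))
  -- heat equation in terms of Ut, Uxx
  have heat : ∀ (x t : ℝ), 0 < t → Ut (x, t) = ν * Uxx (x, t) := by
    intro x t ht
    have h1 : deriv (fun t' => u x t') t = Ut (x, t) := (e2 x t ht).deriv
    have h2 : (fun x' => deriv (fun x'' => u x'' t) x') = fun x' => Ux (x', t) := by
      funext x'
      exact (e1 x' t ht).deriv
    have h3 := hu_heat x t ht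
    rw [h1, h2, (e3 x t ht).deriv] at h3
    exact h3
  -- x-derivative of the heat equation : Utx = ν * Uxxx
  have heat_x : ∀ (x t : ℝ), 0 < t →
      fderiv ℝ Ut (x, t) ((1 : ℝ), (0 : ℝ)) = ν * Uxxx (x, t) := by
    intro x t ht
    have h1 : HasDerivAt (fun x' => Ut (x', t)) (ν * Uxxx (x, t)) x := by
      have : (fun x' => Ut (x', t)) = fun x' => ν * Uxx (x', t) := by
        funext x'
        exact heat x' t ht
      rw [this]
      exact (e5 x t ht).const_mul ν
    exact ((e6 x t ht).unique h1)
  -- symmetry of second derivative: Uxt = Utx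
  have symm : ∀ (x t : ℝ), 0 < t →
      fderiv ℝ Ux (x, t) ((0 : ℝ), (1 : ℝ)) = fderiv ℝ Ut (x, t) ((1 : ℝ), (0 : ℝ)) := by
    intro x t ht
    have hq : (x, t) ∈ s := hmem x t ht
    have hAdiff : DifferentiableAt ℝ (fderiv ℝ U) (x, t) := by
      exact (hA.contDiffAt (hs.mem_nhds hq)).differentiableAt (by simp)
    have hev : ∀ᶠ y in nhds (x, t), HasFDerivAt U (fderiv ℝ U y) y := by
      filter_upwards [hs.mem_nhds hq] with y hy
      exact (dAt hsmooth_infty hy).hasFDerivAt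
    have hsymm := second_derivative_symmetric_of_eventually hev hAdiff.hasFDerivAt
      ((0 : ℝ), (1 : ℝ)) ((1 : ℝ), (0 : ℝ))
    have hx1 : fderiv ℝ Ux (x, t) =
        (fderiv ℝ (fderiv ℝ U) (x, t)).flip ((1 : ℝ), (0 : ℝ)) := by
      have := fderiv_clm_apply (c := fderiv ℝ U)
        (u := fun _ : ℝ × ℝ => ((1 : ℝ), (0 : ℝ))) hAdiff (differentiableAt_const _)
      simpa [hUx_def] using this
    have hx2 : fderiv ℝ Ut (x, t) =
        (fderiv ℝ (fderiv ℝ U) (x, t)).flip ((0 : ℝ), (1 : ℝ)) := by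
      have := fderiv_clm_apply (c := fderiv ℝ U)
        (u := fun _ : ℝ × ℝ => ((0 : ℝ), (1 : ℝ))) hAdiff (differentiableAt_const _)
      simpa [hUt_def] using this
    rw [hx1, hx2]
    simpa using hsymm
  -- main computation
  intro x t ht
  have ht' : (0 : ℝ) < t := ht
  have hupos : ∀ (x' t' : ℝ), 0 < t' → U (x', t') ≠ 0 := by
    intro x' t' ht'
    exact ne_of_gt (hu_pos x' t' ht')
  -- f as a function of x at fixed t
  have hfslice : (fun x' => f x' t) = fun x' => -2 * ν * Ux (x', t) / U (x', t) := by
    funext x'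
    rw [hf x' t, (e1 x' t ht').deriv]
  -- first x-derivative of f
  have hfx : ∀ x' : ℝ, HasDerivAt (fun x'' => f x'' t)
      ((-2 * ν * Uxx (x', t) * U (x', t) - -2 * ν * Ux (x', t) * Ux (x', t)) /
        (U (x', t)) ^ 2) x' := by
    intro x'
    rw [hfslice]
    exact (((e3 x' t ht').const_mul (-2 * ν)).div
      (hasDerivAt_slice1 (dAt hsmooth_infty (hmem x' t ht'))) (hupos x' t ht'))
  -- second x-derivative of f
  have hfxfun : (fun x' => deriv (fun x'' => f x'' t) x') =
      fun x' => (-2 * ν * Uxx (x', t) * U (x', t) - -2 * ν * Ux (x', t) * Ux (x', t)) /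
        (U (x', t)) ^ 2 := by
    funext x'
    exact (hfx x').deriv
  have hfxx : HasDerivAt (fun x' => deriv (fun x'' => f x'' t) x')
      (((-2 * ν * Uxxx (x, t) * U (x, t) + -2 * ν * Uxx (x, t) * Ux (x, t)
          - (-2 * ν * Uxx (x, t) * Ux (x, t) + -2 * ν * Ux (x, t) * Uxx (x, t))) *
            (U (x, t)) ^ 2 -
        (-2 * ν * Uxx (x, t) * U (x, t) - -2 * ν * Ux (x, t) * Ux (x, t)) *
          (2 * (U (x, t)) ^ 1 * Ux (x, t))) / ((U (x, t)) ^ 2) ^ 2) x := by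
    rw [hfxfun]
    have hU' : HasDerivAt (fun x' => U (x', t)) (Ux (x, t)) x :=
      hasDerivAt_slice1 (dAt hsmooth_infty (hmem x t ht'))
    have hnum : HasDerivAt
        (fun x' => -2 * ν * Uxx (x', t) * U (x', t) - -2 * ν * Ux (x', t) * Ux (x', t))
        (-2 * ν * Uxxx (x, t) * U (x, t) + -2 * ν * Uxx (x, t) * Ux (x, t)
          - (-2 * ν * Uxx (x, t) * Ux (x, t) + -2 * ν * Ux (x, t) * Uxx (x, t))) x := by
      exact ((((e5 x t ht').const_mul (-2 * ν)).mul hU').sub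
        (((e3 x t ht').const_mul (-2 * ν)).mul (e3 x t ht')))
    have hden : HasDerivAt (fun x' => (U (x', t)) ^ 2)
        (2 * (U (x, t)) ^ 1 * Ux (x, t)) x := by
      simpa using hU'.fun_pow 2
    exact hnum.div hden (pow_ne_zero 2 (hupos x t ht'))
  -- t-derivative of f
  have hft : HasDerivAt (fun t' => f x t')
      ((-2 * ν * fderiv ℝ Ux (x, t) ((0 : ℝ), (1 : ℝ)) * U (x, t)
          - -2 * ν * Ux (x, t) * Ut (x, t)) / (U (x, t)) ^ 2) t := by
    have hG : HasDerivAt (fun t' => -2 * ν * Ux (x, t') / U (x, t'))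
        ((-2 * ν * fderiv ℝ Ux (x, t) ((0 : ℝ), (1 : ℝ)) * U (x, t)
          - -2 * ν * Ux (x, t) * Ut (x, t)) / (U (x, t)) ^ 2) t := by
      exact (((e4 x t ht').const_mul (-2 * ν)).div
        (hasDerivAt_slice2 (dAt hsmooth_infty (hmem x t ht'))) (hupos x t ht'))
    have hev : (fun t' => f x t') =ᶠ[nhds t] fun t' => -2 * ν * Ux (x, t') / U (x, t') := by
      filter_upwards [isOpen_Ioi.mem_nhds ht'] with t'' ht''
      rw [hf x t'', (e1 x t'' ht'').deriv]
    exact hG.congr_of_eventuallyEq hev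
  -- put everything together
  rw [hft.deriv, hfxx.deriv, (hfx x).deriv, hf x t, (e1 x t ht').deriv,
    symm x t ht', heat_x x t ht', heat x t ht']
  have hu0 : U (x, t) ≠ 0 := hupos x t ht'
  have hux : u x t = U (x, t) := rfl
  rw [hux]
  field_simp
  ring
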